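/- Let L be the 3-dimensional Lie algebra over F_q with basis x, y, z and brackets [x,y] = y, [x,z] = [y,z] = 0. Then the two-dimensional Lie subalgebras of L are precisely the q+1 planes containing y together with the q planes span(x + αy, z) for α ∈ F_q; in particular L has exactly 2q+1 two-dimensional Lie subalgebras. -/

import Mathlib

open Module

section Aux

variable {F L : Type*} [Field F] [AddCommGroup L] [Module F L]

lemma aux_finrank_span_pair_two (v w : L)
    (h : ∀ s t : F, s • v + t • w = 0 → s = 0 ∧ t = 0) :
    finrank F (Submodule.span F {v, w}) = 2 := by
  have hli : LinearIndependent F ![v, w] := LinearIndependent.pair_iff.mpr h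
  have hr : (Set.range ![v, w]) = {v, w} := by
    simp [Matrix.range_cons, Matrix.range_empty, Set.pair_comm]
  have := finrank_span_eq_card hli
  rwa [hr, Fintype.card_fin] at this

end Aux

/-- For the solvable non-nilpotent 3-dimensional Lie algebra over `F_q` with
basis `x, y, z`, `[x,y] = y`, `[x,z] = [y,z] = 0`: a two-dimensional subspace
is a Lie subalgebra iff it contains `y` or equals `span(x + αy, z)` for some
`α`; there are `q+1` planes containing `y`, and `2q+1` two-dimensional
subalgebras in total. -/
theorem solvable_dim3_derived1_two_dim_subalgebras
    (F : Type*) [Field F] [Fintype F] (q : ℕ) (hq : Fintype.card F = q)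
    (L : Type*) [LieRing L] [LieAlgebra F L]
    (x y z : L) (hspan : Submodule.span F {x, y, z} = ⊤)
    (hdim : finrank F L = 3)
    (hxy : ⁅x, y⁆ = y) (hxz : ⁅x, z⁆ = 0) (hyz : ⁅y, z⁆ = 0) :
    (∀ U : Submodule F L, finrank F U = 2 →
        ((∀ a ∈ U, ∀ b ∈ U, ⁅a, b⁆ ∈ U) ↔
          (y ∈ U ∨ ∃ α : F, U = Submodule.span F {x + α • y, z}))) ∧
    Nat.card {U : Submodule F L // finrank F U = 2 ∧ y ∈ U} = q + 1 ∧
    Nat.card {A : LieSubalgebra F L // finrank F A = 2} = 2 * q + 1 := by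
  classical
  haveI : Module.Finite F L := ⟨⟨{x, y, z}, by simpa using hspan⟩⟩
  -- a basis from the spanning set
  have hr3 : Set.range ![x, y, z] = {x, y, z} := by
    simp [Matrix.range_cons, Matrix.range_empty]
    ext a; simp; tauto
  have hle : ⊤ ≤ Submodule.span F (Set.range ![x, y, z]) := by rw [hr3, hspan]
  have hcard : Fintype.card (Fin 3) = finrank F L := by simp [hdim]
  set B := basisOfTopLeSpanOfCardEqFinrank ![x, y, z] hle hcard with hB
  have hBcoe : ⇑B = ![x, y, z] := coe_basisOfTopLeSpanOfCardEqFinrank _ _ _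
  set φ : Fin 3 → L →ₗ[F] F := fun i => B.coord i with hφ
  have hval : ∀ i j, φ i (![x, y, z] j) = if j = i then 1 else 0 := by
    intro i j
    rw [← hBcoe]
    simp [hφ, Basis.coord_apply, Basis.repr_self, Finsupp.single_apply]
  have h0x : φ 0 x = 1 := by simpa using hval 0 0
  have h0y : φ 0 y = 0 := by simpa using hval 0 1
  have h0z : φ 0 z = 0 := by simpa using hval 0 2
  have h1x : φ 1 x = 0 := by simpa using hval 1 0
  have h1y : φ 1 y = 1 := by simpa using hval 1 1
  have h1z : φ 1 z = 0 := by simpa using hval 1 2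
  have h2x : φ 2 x = 0 := by simpa using hval 2 0
  have h2y : φ 2 y = 0 := by simpa using hval 2 1
  have h2z : φ 2 z = 1 := by simpa using hval 2 2
  have hrepr : ∀ a : L, a = φ 0 a • x + φ 1 a • y + φ 2 a • z := by
    intro a
    have := B.sum_repr a
    rw [Fin.sum_univ_three] at this
    have e0 : B 0 = x := by rw [hBcoe]; rfl
    have e1 : B 1 = y := by rw [hBcoe]; rfl
    have e2 : B 2 = z := by rw [hBcoe]; rfl
    rw [e0, e1, e2] at this
    simpa [hφ, Basis.coord_apply] using this.symm
  have hzero : ∀ a : L, φ 0 a = 0 → φ 1 a = 0 → φ 2 a = 0 → a = 0 := by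
    intro a ha0 ha1 ha2
    rw [hrepr a, ha0, ha1, ha2]; simp
  -- all bracket values on basis
  have hyx : ⁅y, x⁆ = -y := by rw [← lie_skew, hxy]
  have hzx : ⁅z, x⁆ = 0 := by rw [← lie_skew, hxz, neg_zero]
  have hzy : ⁅z, y⁆ = 0 := by rw [← lie_skew, hyz, neg_zero]
  -- the bracket formula
  have hlie : ∀ a b : L, ⁅a, b⁆ = (φ 0 a * φ 1 b - φ 1 a * φ 0 b) • y := by
    intro a b
    conv_lhs => rw [hrepr a, hrepr b]
    simp only [add_lie, lie_add, smul_lie, lie_smul, hxy, hxz, hyz, hyx, hzx, hzy,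
      lie_self, smul_zero, add_zero, zero_add, smul_neg, smul_smul]
    module
  -- the three families of planes
  set P1 : F → Submodule F L := fun s => Submodule.span F {y, x + s • z} with hP1
  set P2 : Submodule F L := Submodule.span F {y, z} with hP2
  set P3 : F → Submodule F L := fun α => Submodule.span F {x + α • y, z} with hP3
  have hyP1 : ∀ s, y ∈ P1 s := fun s =>
    Submodule.subset_span (by simp)
  have hyP2 : y ∈ P2 := Submodule.subset_span (by simp)
  have frP1 : ∀ s, finrank F (P1 s) = 2 := by
    intro s
    apply aux_finrank_span_pair_two
    intro a b hab
    have e0 := congrArg (φ 0) hab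
    have e1 := congrArg (φ 1) hab
    simp [map_add, map_smul, h0x, h0y, h0z, h1x, h1y, h1z] at e0 e1
    exact ⟨e1, e0⟩
  have frP2 : finrank F P2 = 2 := by
    apply aux_finrank_span_pair_two
    intro a b hab
    have e1 := congrArg (φ 1) hab
    have e2 := congrArg (φ 2) hab
    simp [map_add, map_smul, h1y, h1z, h2y, h2z] at e1 e2
    exact ⟨e1, e2⟩
  have frP3 : ∀ α, finrank F (P3 α) = 2 := by
    intro α
    apply aux_finrank_span_pair_two
    intro a b hab
    have e0 := congrArg (φ 0) hab
    have e2 := congrArg (φ 2) hab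
    simp [map_add, map_smul, h0x, h0y, h0z, h2x, h2y, h2z] at e0 e2
    exact ⟨e0, e2⟩
  have hynP3 : ∀ α, y ∉ P3 α := by
    intro α hy
    obtain ⟨a, b, hab⟩ := Submodule.mem_span_pair.mp hy
    have e0 := congrArg (φ 0) hab
    have e1 := congrArg (φ 1) hab
    simp [map_add, map_smul, h0x, h0y, h0z, h1x, h1y, h1z] at e0 e1
    rw [e0] at e1
    simp at e1
  -- coordinates of P3 members
  have hP3coord : ∀ α, ∀ a ∈ P3 α, φ 1 a = α * φ 0 a := by
    intro α a ha
    obtain ⟨s, t, hst⟩ := Submodule.mem_span_pair.mp ha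
    have e0 := congrArg (φ 0) hst
    have e1 := congrArg (φ 1) hst
    simp [map_add, map_smul, h0x, h0y, h0z, h1x, h1y, h1z] at e0 e1
    rw [← e0, ← e1]; ring
  -- closure of P3
  have hP3closed : ∀ α, ∀ a ∈ P3 α, ∀ b ∈ P3 α, ⁅a, b⁆ ∈ P3 α := by
    intro α a ha b hb
    rw [hlie, hP3coord α a ha, hP3coord α b hb]
    have : φ 0 a * (α * φ 0 b) - α * φ 0 a * φ 0 b = 0 := by ring
    rw [this, zero_smul]
    exact zero_mem _
  -- classification of planes containing y
  have hplane : ∀ U : Submodule F L, finrank F U = 2 → y ∈ U →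
      U = P2 ∨ ∃ s, U = P1 s := by
    intro U hU hy
    by_cases hex : ∃ u ∈ U, φ 0 u ≠ 0
    · obtain ⟨u, hu, hu0⟩ := hex
      set u' : L := (φ 0 u)⁻¹ • u with hu'
      have hu'U : u' ∈ U := U.smul_mem _ hu
      have hu'0 : φ 0 u' = 1 := by simp [hu', map_smul, inv_mul_cancel₀ hu0]
      set s : F := φ 2 u' with hs
      set w : L := u' - φ 1 u' • y with hw
      have hwU : w ∈ U := U.sub_mem hu'U (U.smul_mem _ hy)
      have hweq : w = x + s • z := by
        have c0 : φ 0 w = 1 := by simp [hw, map_sub, map_smul, h0y, hu'0]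
        have c1 : φ 1 w = 0 := by simp [hw, map_sub, map_smul, h1y]
        have c2 : φ 2 w = s := by simp [hw, map_sub, map_smul, h2y, hs]
        rw [hrepr w, c0, c1, c2]; simp
      right
      refine ⟨s, ?_⟩
      have hle1 : P1 s ≤ U := by
        rw [hP1]
        apply Submodule.span_le.mpr
        rintro v (rfl | rfl)
        · exact hy
        · rwa [← hweq]
      exact (Submodule.eq_of_le_of_finrank_le hle1 (by rw [hU, frP1 s])).symm
    · push_neg at hex
      left
      have hle2 : U ≤ P2 := by
        intro v hv
        have h0 : φ 0 v = 0 := hex v hv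
        rw [hrepr v, h0, zero_smul, zero_add]
        exact add_mem (Submodule.smul_mem _ _ (Submodule.subset_span (by simp)))
          (Submodule.smul_mem _ _ (Submodule.subset_span (by simp)))
      exact Submodule.eq_of_le_of_finrank_le hle2 (by rw [hU, frP2])
  -- classification of 2-dim subalgebras not containing y
  have hcls : ∀ U : Submodule F L, finrank F U = 2 →
      (∀ a ∈ U, ∀ b ∈ U, ⁅a, b⁆ ∈ U) → y ∉ U → ∃ α, U = P3 α := by
    intro U hU hclosed hyU
    -- find an element with nonzero first coordinate
    have hex : ∃ u ∈ U, φ 0 u ≠ 0 := by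
      by_contra hne
      push_neg at hne
      have hle2 : U ≤ P2 := by
        intro v hv
        have h0 : φ 0 v = 0 := hne v hv
        rw [hrepr v, h0, zero_smul, zero_add]
        exact add_mem (Submodule.smul_mem _ _ (Submodule.subset_span (by simp)))
          (Submodule.smul_mem _ _ (Submodule.subset_span (by simp)))
      have := Submodule.eq_of_le_of_finrank_le hle2 (by rw [hU, frP2])
      rw [this] at hyU
      exact hyU hyP2
    obtain ⟨u₀, hu₀, hu₀0⟩ := hex
    set u : L := (φ 0 u₀)⁻¹ • u₀ with hu
    have huU : u ∈ U := U.smul_mem _ hu₀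
    have hu0 : φ 0 u = 1 := by simp [hu, map_smul, inv_mul_cancel₀ hu₀0]
    set α : F := φ 1 u with hα
    -- all elements satisfy φ1 v = α * φ0 v
    have hva : ∀ v ∈ U, φ 1 v = α * φ 0 v := by
      intro v hv
      by_contra hne
      set d : F := φ 1 v - α * φ 0 v with hd
      have hdne : d ≠ 0 := fun h => hne (by rw [hd] at h; linear_combination h)
      have hbr : ⁅u, v⁆ ∈ U := hclosed u huU v hv
      rw [hlie, hu0, one_mul, ← hα, ← hd] at hbr
      have : y ∈ U := by
        have := U.smul_mem d⁻¹ hbr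
        rwa [smul_smul, inv_mul_cancel₀ hdne, one_smul] at this
      exact hyU this
    -- find an element not in span {u}
    have hwex : ∃ w ∈ U, w ∉ Submodule.span F {u} := by
      by_contra hno
      push_neg at hno
      have hle : U ≤ Submodule.span F {u} := hno
      have hune : u ≠ 0 := fun h => by rw [h] at hu0; simp at hu0
      have := Submodule.finrank_mono hle
      rw [hU, finrank_span_singleton hune] at this
      omega
    obtain ⟨w, hwU, hwns⟩ := hwex
    set w' : L := w - φ 0 w • u with hw'
    have hw'U : w' ∈ U := U.sub_mem hwU (U.smul_mem _ huU)
    have c0 : φ 0 w' = 0 := by simp [hw', map_sub, map_smul, hu0]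
    have c1 : φ 1 w' = 0 := by
      simp only [hw', map_sub, map_smul, smul_eq_mul]
      rw [hva w hwU, ← hα]; ring
    set t : F := φ 2 w' with ht
    have htne : t ≠ 0 := by
      intro h
      have hw'0 : w' = 0 := hzero w' c0 c1 (by rw [← ht, h])
      have hweq : w = φ 0 w • u := sub_eq_zero.mp hw'0
      exact hwns (Submodule.mem_span_singleton.mpr ⟨φ 0 w, hweq.symm⟩)
    have hzU : z ∈ U := by
      have hz : z = t⁻¹ • w' := by
        have : w' = t • z := by
          rw [hrepr w', c0, c1, ← ht]; simp
        rw [this, smul_smul, inv_mul_cancel₀ htne, one_smul]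
      rw [hz]; exact U.smul_mem _ hw'U
    have hxyU : x + α • y ∈ U := by
      have hne : u - φ 2 u • z = x + α • y := by
        have c0 : φ 0 (u - φ 2 u • z) = 1 := by simp [map_sub, map_smul, hu0, h0z]
        have c1 : φ 1 (u - φ 2 u • z) = α := by
          simp [map_sub, map_smul, h1z, hα]
        have c2 : φ 2 (u - φ 2 u • z) = 0 := by simp [map_sub, map_smul, h2z]
        rw [hrepr (u - φ 2 u • z), c0, c1, c2]; simp
      rw [← hne]; exact U.sub_mem huU (U.smul_mem _ hzU)
    refine ⟨α, ?_⟩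
    have hle3 : P3 α ≤ U := by
      rw [hP3]
      apply Submodule.span_le.mpr
      rintro v (rfl | rfl)
      · exact hxyU
      · exact hzU
    exact (Submodule.eq_of_le_of_finrank_le hle3 (by rw [hU, frP3 α])).symm
  -- Part 1
  have part1 : ∀ U : Submodule F L, finrank F U = 2 →
      ((∀ a ∈ U, ∀ b ∈ U, ⁅a, b⁆ ∈ U) ↔
        (y ∈ U ∨ ∃ α : F, U = Submodule.span F {x + α • y, z})) := by
    intro U hU
    constructor
    · intro hclosed
      by_cases hy : y ∈ U
      · exact Or.inl hy
      · exact Or.inr (hcls U hU hclosed hy)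
    · rintro (hy | ⟨α, rfl⟩)
      · intro a _ b _
        rw [hlie]
        exact U.smul_mem _ hy
      · exact hP3closed α
  -- distinctness facts
  have hP1inj : Function.Injective P1 := by
    intro s s' hss
    have hm : x + s • z ∈ P1 s' := by
      rw [← hss]; exact Submodule.subset_span (by simp)
    obtain ⟨a, b, hab⟩ := Submodule.mem_span_pair.mp hm
    have e0 := congrArg (φ 0) hab
    have e2 := congrArg (φ 2) hab
    simp [map_add, map_smul, h0x, h0y, h0z, h2x, h2y, h2z] at e0 e2
    rw [e0, one_mul] at e2
    exact e2.symm
  have hP1neP2 : ∀ s, P1 s ≠ P2 := by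
    intro s hsp
    have hm : x + s • z ∈ P2 := by
      rw [← hsp]; exact Submodule.subset_span (by simp)
    obtain ⟨a, b, hab⟩ := Submodule.mem_span_pair.mp hm
    have e0 := congrArg (φ 0) hab
    simp [map_add, map_smul, h0y, h0z, h0x] at e0
  have hP3inj : Function.Injective P3 := by
    intro α α' hαα
    have hm : x + α • y ∈ P3 α' := by
      rw [← hαα]; exact Submodule.subset_span (by simp)
    obtain ⟨a, b, hab⟩ := Submodule.mem_span_pair.mp hm
    have e0 := congrArg (φ 0) hab
    have e1 := congrArg (φ 1) hab
    simp [map_add, map_smul, h0x, h0y, h0z, h1x, h1y, h1z] at e0 e1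
    rw [e0, one_mul] at e1
    exact e1.symm
  have hP1neP3 : ∀ s α, P1 s ≠ P3 α := fun s α h => hynP3 α (h ▸ hyP1 s)
  have hP2neP3 : ∀ α, P2 ≠ P3 α := fun α h => hynP3 α (h ▸ hyP2)
  refine ⟨part1, ?_, ?_⟩
  · -- planes containing y
    set e : F ⊕ Unit → {U : Submodule F L // finrank F U = 2 ∧ y ∈ U} :=
      Sum.elim (fun s => ⟨P1 s, frP1 s, hyP1 s⟩) (fun _ => ⟨P2, frP2, hyP2⟩) with he
    have hbij : Function.Bijective e := by
      constructor
      · rintro (s | u) (s' | u') h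
        · simp only [he, Sum.elim_inl, Subtype.mk.injEq] at h
          exact congrArg Sum.inl (hP1inj h)
        · simp only [he, Sum.elim_inl, Sum.elim_inr, Subtype.mk.injEq] at h
          exact absurd h (hP1neP2 s)
        · simp only [he, Sum.elim_inl, Sum.elim_inr, Subtype.mk.injEq] at h
          exact absurd h.symm (hP1neP2 s')
        · simp
      · rintro ⟨U, hU, hy⟩
        rcases hplane U hU hy with h | ⟨s, h⟩
        · exact ⟨Sum.inr (), Subtype.ext h.symm⟩
        · exact ⟨Sum.inl s, Subtype.ext h.symm⟩
    rw [← Nat.card_eq_of_bijective e hbij, Nat.card_sum, Nat.card_eq_fintype_card, hq]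
    simp
  · -- all 2-dim subalgebras
    -- subalgebras from submodules
    have hP1closed : ∀ s, ∀ a ∈ P1 s, ∀ b ∈ P1 s, ⁅a, b⁆ ∈ P1 s := by
      intro s a _ b _
      rw [hlie]
      exact Submodule.smul_mem _ _ (hyP1 s)
    have hP2closed : ∀ a ∈ P2, ∀ b ∈ P2, ⁅a, b⁆ ∈ P2 := by
      intro a _ b _
      rw [hlie]
      exact Submodule.smul_mem _ _ hyP2
    set A1 : F → LieSubalgebra F L := fun s =>
      { P1 s with lie_mem' := fun {a b} ha hb => hP1closed s a ha b hb } with hA1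
    set A2 : LieSubalgebra F L :=
      { P2 with lie_mem' := fun {a b} ha hb => hP2closed a ha b hb } with hA2
    set A3 : F → LieSubalgebra F L := fun α =>
      { P3 α with lie_mem' := fun {a b} ha hb => hP3closed α a ha b hb } with hA3
    have hA1sub : ∀ s, (A1 s : Submodule F L) = P1 s := fun s => rfl
    have hA2sub : (A2 : Submodule F L) = P2 := rfl
    have hA3sub : ∀ α, (A3 α : Submodule F L) = P3 α := fun α => rfl
    set e : (F ⊕ Unit) ⊕ F → {A : LieSubalgebra F L // finrank F A = 2} :=
      Sum.elim (Sum.elim (fun s => ⟨A1 s, frP1 s⟩) (fun _ => ⟨A2, frP2⟩))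
        (fun α => ⟨A3 α, frP3 α⟩) with he
    have hsubinj := @LieSubalgebra.toSubmodule_injective F L _ _ _
    have hbij : Function.Bijective e := by
      constructor
      · rintro ((s | u) | α) ((s' | u') | α') h <;>
          simp only [he, Sum.elim_inl, Sum.elim_inr, Subtype.mk.injEq] at h
        · exact congrArg (Sum.inl ∘ Sum.inl)
            (hP1inj (congrArg LieSubalgebra.toSubmodule h))
        · exact absurd (congrArg LieSubalgebra.toSubmodule h) (hP1neP2 s)
        · exact absurd (congrArg LieSubalgebra.toSubmodule h) (hP1neP3 s α')
        · exact absurd (congrArg LieSubalgebra.toSubmodule h).symm (hP1neP2 s')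
        · rcases u; rcases u'; rfl
        · exact absurd (congrArg LieSubalgebra.toSubmodule h) (hP2neP3 α')
        · exact absurd (congrArg LieSubalgebra.toSubmodule h).symm (hP1neP3 s' α)
        · exact absurd (congrArg LieSubalgebra.toSubmodule h).symm (hP2neP3 α)
        · exact congrArg Sum.inr (hP3inj (congrArg LieSubalgebra.toSubmodule h))
      · rintro ⟨A, hA⟩
        have hAclosed : ∀ a ∈ (A : Submodule F L), ∀ b ∈ (A : Submodule F L),
            ⁅a, b⁆ ∈ (A : Submodule F L) := fun a ha b hb => A.lie_mem' ha hb
        by_cases hy : y ∈ (A : Submodule F L)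
        · rcases hplane (A : Submodule F L) hA hy with h | ⟨s, h⟩
          · refine ⟨Sum.inl (Sum.inr ()), ?_⟩
            simp only [he, Sum.elim_inl, Sum.elim_inr]
            exact Subtype.ext (hsubinj (by rw [hA2sub, ← h]))
          · refine ⟨Sum.inl (Sum.inl s), ?_⟩
            simp only [he, Sum.elim_inl]
            exact Subtype.ext (hsubinj (by rw [hA1sub, ← h]))
        · obtain ⟨α, h⟩ := hcls (A : Submodule F L) hA hAclosed hy
          refine ⟨Sum.inr α, ?_⟩
          simp only [he, Sum.elim_inr]
          exact Subtype.ext (hsubinj (by rw [hA3sub, ← h]))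
    rw [← Nat.card_eq_of_bijective e hbij, Nat.card_sum, Nat.card_sum,
      Nat.card_eq_fintype_card, hq]
    simp [Nat.card_unique]
    ring
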